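/- Let φ : ℂ³ → ℂ⁵ be the polynomial map φ(a,b,c) = (a, b, c², (a−b)c, abc³ + c⁵), and in coordinates (x, y, z, t, u) on ℂ⁵ let M be the 2×4 matrix with rows (t, u, (x−y)z, (xy+z)z²) and (x−y, (xy+z)z, t, u). Then the Zariski closure of the image of φ equals the common zero locus in ℂ⁵ of the six 2×2 minors of M. -/

import Mathlib

open MvPolynomial

/-- The parametrisation `φ(a,b,c) = (a, b, c², (a−b)c, abc³ + c⁵)` of the
(affine cone over the) divisor `D ⊂ ℙ(1,1,2,2,5)`. -/
noncomputable def phiD : (Fin 3 → ℂ) → (Fin 5 → ℂ) := fun p =>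
  ![p 0, p 1, (p 2) ^ 2, (p 0 - p 1) * p 2, p 0 * p 1 * (p 2) ^ 3 + (p 2) ^ 5]

/-- The first row `(t, u, (x−y)z, (xy+z)z²)` of the matrix `M`,
in coordinates `x = X 0, y = X 1, z = X 2, t = X 3, u = X 4` on `ℂ⁵`. -/
noncomputable def Mrow1 : Fin 4 → MvPolynomial (Fin 5) ℂ :=
  ![X 3, X 4, (X 0 - X 1) * X 2, (X 0 * X 1 + X 2) * X 2 ^ 2]

/-- The second row `(x−y, (xy+z)z, t, u)` of the matrix `M`. -/
noncomputable def Mrow2 : Fin 4 → MvPolynomial (Fin 5) ℂ :=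
  ![X 0 - X 1, (X 0 * X 1 + X 2) * X 2, X 3, X 4]

/-- The six `2×2` minors of the `2×4` matrix `M`. -/
noncomputable def minorsM : Set (MvPolynomial (Fin 5) ℂ) :=
  { g | ∃ i j : Fin 4, i < j ∧ g = Mrow1 i * Mrow2 j - Mrow1 j * Mrow2 i }

lemma sq_eq_or (a b : ℂ) (h : a ^ 2 = b ^ 2) : a = b ∨ a = -b := by
  have : (a - b) * (a + b) = 0 := by linear_combination h
  rcases mul_eq_zero.mp this with h' | h'
  · left; exact sub_eq_zero.mp h'
  · right; exact eq_neg_of_add_eq_zero_left h'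

lemma range_phiD_eq : Set.range phiD = zeroLocus ℂ (Ideal.span minorsM) := by
  ext v
  constructor
  · rintro ⟨p, rfl⟩
    rw [mem_zeroLocus_iff]
    intro q hq
    have hsub : minorsM ⊆ (RingHom.ker (eval (phiD p)) : Ideal (MvPolynomial (Fin 5) ℂ)) := by
      rintro g ⟨i, j, hij, rfl⟩
      simp only [SetLike.mem_coe, RingHom.mem_ker]
      fin_cases i <;> fin_cases j <;>
        simp [Mrow1, Mrow2, phiD] <;> ring
    exact (Ideal.span_le.mpr hsub) hq
  · intro hv
    set x := v 0 with hx
    set y := v 1 with hy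
    set z := v 2 with hz
    set t := v 3 with ht
    set u := v 4 with hu
    have key : ∀ i j : Fin 4, i < j →
        eval v (Mrow1 i) * eval v (Mrow2 j) - eval v (Mrow1 j) * eval v (Mrow2 i) = 0 := by
      intro i j hij
      have := hv _ (Ideal.subset_span ⟨i, j, hij, rfl⟩)
      simpa using this
    have h13 : t ^ 2 = (x - y) ^ 2 * z := by
      have := key 0 2 (by decide)
      simp [Mrow1, Mrow2, ← hx, ← hy, ← hz, ← ht, ← hu] at this
      linear_combination this
    have h12 : t * ((x * y + z) * z) = u * (x - y) := by
      have := key 0 1 (by decide)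
      simp [Mrow1, Mrow2, ← hx, ← hy, ← hz, ← ht, ← hu] at this
      linear_combination this
    have h24 : u ^ 2 = ((x * y + z) * z) ^ 2 * z := by
      have := key 1 3 (by decide)
      simp [Mrow1, Mrow2, ← hx, ← hy, ← hz, ← ht, ← hu] at this
      linear_combination this
    obtain ⟨d, hd⟩ : ∃ d : ℂ, d ^ 2 = z :=
      IsAlgClosed.exists_pow_nat_eq z (n := 2) (by norm_num)
    have hc : ∃ c : ℂ, c ^ 2 = z ∧ (x - y) * c = t ∧ (x * y + z) * z * c = u := by
      by_cases hxy : x = y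
      · have ht0 : t = 0 := by
          have : t ^ 2 = 0 := by rw [h13, hxy]; ring
          exact pow_eq_zero_iff (by norm_num) |>.mp this
        by_cases hw : (x * y + z) * z = 0
        · have hu0 : u = 0 := by
            have : u ^ 2 = 0 := by rw [h24, hw]; ring
            exact pow_eq_zero_iff (by norm_num) |>.mp this
          exact ⟨d, hd, by rw [hxy, ht0]; ring, by rw [hw, hu0]; ring⟩
        · have : ((x * y + z) * z * d) ^ 2 = u ^ 2 := by
            linear_combination ((x * y + z) * z) ^ 2 * hd - h24
          rcases sq_eq_or _ _ this with h' | h'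
          · exact ⟨d, hd, by rw [hxy, ht0]; ring, h'⟩
          · exact ⟨-d, by rw [neg_pow]; simp [hd], by rw [hxy, ht0]; ring,
              by rw [mul_neg, h']; ring⟩
      · have hxy' : x - y ≠ 0 := sub_ne_zero.mpr hxy
        have hsq : ((x - y) * d) ^ 2 = t ^ 2 := by
          rw [h13, mul_pow, hd]
        have pick : ∃ c : ℂ, c ^ 2 = z ∧ (x - y) * c = t := by
          rcases sq_eq_or _ _ hsq with h' | h'
          · exact ⟨d, hd, h'⟩
          · exact ⟨-d, by rw [neg_pow]; simp [hd], by rw [mul_neg, h']; ring⟩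
        obtain ⟨c, hc2, hct⟩ := pick
        refine ⟨c, hc2, hct, ?_⟩
        have : (x - y) * ((x * y + z) * z * c) = (x - y) * u := by
          calc (x - y) * ((x * y + z) * z * c) = ((x - y) * c) * ((x * y + z) * z) := by ring
            _ = t * ((x * y + z) * z) := by rw [hct]
            _ = u * (x - y) := h12
            _ = (x - y) * u := by ring
        exact mul_left_cancel₀ hxy' this
    obtain ⟨c, hc2, hct, hcu⟩ := hc
    refine ⟨![x, y, c], ?_⟩
    funext i
    fin_cases i <;> simp [phiD, ← hx, ← hy, ← hz, ← ht, ← hu]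
    · exact hc2
    · exact hct
    · calc x * y * c ^ 3 + c ^ 5 = (x * y + c ^ 2) * c ^ 2 * c := by ring
        _ = u := by rw [hc2]; exact hcu

theorem zariski_closure_image_eq_zeroLocus_minors :
    zeroLocus ℂ (vanishingIdeal ℂ (Set.range phiD)) = zeroLocus ℂ (Ideal.span minorsM) := by
  rw [range_phiD_eq]
  apply le_antisymm
  · exact zeroLocus_anti_mono (le_vanishingIdeal_zeroLocus _)
  · exact zeroLocus_vanishingIdeal_le _
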